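/- For every β ≥ 0, μ ∈ ℝ and σ > 0, set ξ₂ = −β/((2π)^(β/2)·σ^(β+1)·(β+1)^(3/2)). Then ∫_ℝ ( (1/σ)·((x−μ)²/σ² − 1) )²·φ_{μ,σ}(x)^(2β+1) dx − ξ₂² = τ(β)/(σ^(2(β+1))·(2π)^β), where τ(β) = 2·(2β²+1)·√(2β+1)/(2β+1)³ − β²/(β+1)³ and φ_{μ,σ}(x) = (√(2π)·σ)⁻¹·exp(−(x−μ)²/(2σ²)). -/

import Mathlib

open Real
open MeasureTheory

lemma integrable_pow_gauss {b : ℝ} (hb : 0 < b) (n : ℕ) :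
    Integrable fun x : ℝ => x ^ n * Real.exp (-b * x ^ 2) := by
  have hn : (-1 : ℝ) < n := lt_of_lt_of_le (by norm_num) (Nat.cast_nonneg n)
  simpa [Real.rpow_natCast] using integrable_rpow_mul_exp_neg_mul_sq hb hn

lemma gauss_moment_rec {b : ℝ} (hb : 0 < b) (n : ℕ) :
    (∫ x : ℝ, x ^ (n + 2) * Real.exp (-b * x ^ 2))
      = (n + 1) / (2 * b) * ∫ x : ℝ, x ^ n * Real.exp (-b * x ^ 2) := by
  set f : ℝ → ℝ := fun x => x ^ (n + 1) * Real.exp (-b * x ^ 2) with hf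
  set f' : ℝ → ℝ := fun x =>
    (n + 1) * (x ^ n * Real.exp (-b * x ^ 2))
      - 2 * b * (x ^ (n + 2) * Real.exp (-b * x ^ 2)) with hf'
  have hderiv : ∀ x, HasDerivAt f (f' x) x := by
    intro x
    have h1 : HasDerivAt (fun x : ℝ => x ^ (n + 1)) (((n : ℝ) + 1) * x ^ n) x := by
      simpa using hasDerivAt_pow (n + 1) x
    have h2 : HasDerivAt (fun x : ℝ => Real.exp (-b * x ^ 2))
        (Real.exp (-b * x ^ 2) * (-b * (2 * x))) x := by
      have h3 : HasDerivAt (fun x : ℝ => -b * x ^ 2) (-b * (2 * x)) x := by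
        simpa using (hasDerivAt_pow 2 x).const_mul (-b)
      exact h3.exp
    have h4 := h1.fun_mul h2
    refine h4.congr_deriv ?_
    simp only [hf']
    ring
  have h0 : ∫ x, f' x = 0 :=
    integral_eq_zero_of_hasDerivAt_of_integrable hderiv
      ((((integrable_pow_gauss hb n).const_mul _)).sub
        ((integrable_pow_gauss hb (n + 2)).const_mul _))
      (integrable_pow_gauss hb (n + 1))
  rw [hf', integral_sub ((integrable_pow_gauss hb n).const_mul _)
      ((integrable_pow_gauss hb (n + 2)).const_mul _),
    MeasureTheory.integral_const_mul, MeasureTheory.integral_const_mul, sub_eq_zero] at h0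
  rw [div_mul_eq_mul_div, eq_div_iff (by positivity : (2:ℝ) * b ≠ 0)]
  linarith [h0]

lemma gauss_moment_two {b : ℝ} (hb : 0 < b) :
    (∫ x : ℝ, x ^ 2 * Real.exp (-b * x ^ 2)) = 1 / (2 * b) * Real.sqrt (π / b) := by
  have h := gauss_moment_rec hb 0
  simp only [pow_zero, one_mul] at h
  rw [h, integral_gaussian]
  norm_num

lemma gauss_moment_four {b : ℝ} (hb : 0 < b) :
    (∫ x : ℝ, x ^ 4 * Real.exp (-b * x ^ 2)) = 3 / (4 * b ^ 2) * Real.sqrt (π / b) := by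
  have h := gauss_moment_rec hb 2
  norm_num at h
  have h2 := gauss_moment_two hb
  simp only [neg_mul] at h h2 ⊢
  rw [h, h2]

  have : (0:ℝ) < b := hb
  field_simp
  ring

lemma gauss_poly_integral {b : ℝ} (hb : 0 < b) (p q r : ℝ) :
    (∫ x : ℝ, (p * x ^ 4 + q * x ^ 2 + r) * Real.exp (-b * x ^ 2))
      = (p * (3 / (4 * b ^ 2)) + q * (1 / (2 * b)) + r) * Real.sqrt (π / b) := by
  have h4 : Integrable fun x : ℝ => p * (x ^ 4 * Real.exp (-b * x ^ 2)) :=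
    (integrable_pow_gauss hb 4).const_mul p
  have h2 : Integrable fun x : ℝ => q * (x ^ 2 * Real.exp (-b * x ^ 2)) :=
    (integrable_pow_gauss hb 2).const_mul q
  have h0 : Integrable fun x : ℝ => r * Real.exp (-b * x ^ 2) :=
    (integrable_exp_neg_mul_sq hb).const_mul r
  have : (∫ x : ℝ, (p * x ^ 4 + q * x ^ 2 + r) * Real.exp (-b * x ^ 2))
      = ∫ x : ℝ, (p * (x ^ 4 * Real.exp (-b * x ^ 2)) + q * (x ^ 2 * Real.exp (-b * x ^ 2))
          + r * Real.exp (-b * x ^ 2)) := by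
    congr 1; funext x; ring
  have h42 : Integrable (fun x : ℝ => p * (x ^ 4 * Real.exp (-b * x ^ 2))
      + q * (x ^ 2 * Real.exp (-b * x ^ 2))) volume := h4.add h2
  rw [this, integral_add h42 h0, integral_add h4 h2,
    MeasureTheory.integral_const_mul, MeasureTheory.integral_const_mul,
    MeasureTheory.integral_const_mul, gauss_moment_two hb, gauss_moment_four hb,
    integral_gaussian]
  ring

/-- In the normal model, the `(2,2)` entry of `K_β(μ,σ)`:
`∫ ((1/σ)·((x−μ)²/σ² − 1))²·φ_{μ,σ}^(2β+1) dx − ξ₂² = τ(β)/(σ^(2(β+1))·(2π)^β)`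
with `ξ₂ = −β/((2π)^(β/2)·σ^(β+1)·(β+1)^(3/2))` and
`τ(β) = 2(2β²+1)√(2β+1)/(2β+1)³ − β²/(β+1)³`. -/
theorem normal_K_beta_scale (β μ σ : ℝ) (hβ : 0 ≤ β) (hσ : 0 < σ)
    (ξ₂ : ℝ) (hξ₂ : ξ₂ = -β / ((2 * π) ^ (β / 2) * σ ^ (β + 1) * (β + 1) ^ ((3 : ℝ) / 2)))
    (τ : ℝ)
    (hτ : τ = 2 * (2 * β ^ 2 + 1) * Real.sqrt (2 * β + 1) / (2 * β + 1) ^ 3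
            - β ^ 2 / (β + 1) ^ 3) :
    (∫ x : ℝ, ((1 / σ) * ((x - μ) ^ 2 / σ ^ 2 - 1)) ^ 2 *
          ((Real.sqrt (2 * π) * σ)⁻¹ * Real.exp (-(x - μ) ^ 2 / (2 * σ ^ 2))) ^ (2 * β + 1))
        - ξ₂ ^ 2
      = τ / (σ ^ (2 * (β + 1)) * (2 * π) ^ β) := by
  have hπ : (0:ℝ) < π := pi_pos
  have hc : (0:ℝ) < 2 * β + 1 := by linarith
  have hb : (0:ℝ) < (2 * β + 1) / (2 * σ ^ 2) := by positivity
  have hT : (0:ℝ) < Real.sqrt (2 * π) := Real.sqrt_pos.2 (by positivity)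
  have hs : (0:ℝ) < Real.sqrt (2 * β + 1) := Real.sqrt_pos.2 hc
  -- Step 1: translate
  have hshift : (∫ x : ℝ, ((1 / σ) * ((x - μ) ^ 2 / σ ^ 2 - 1)) ^ 2 *
          ((Real.sqrt (2 * π) * σ)⁻¹ * Real.exp (-(x - μ) ^ 2 / (2 * σ ^ 2))) ^ (2 * β + 1))
      = ∫ x : ℝ, ((1 / σ) * (x ^ 2 / σ ^ 2 - 1)) ^ 2 *
          ((Real.sqrt (2 * π) * σ)⁻¹ * Real.exp (-x ^ 2 / (2 * σ ^ 2))) ^ (2 * β + 1) :=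
    integral_sub_right_eq_self (μ := volume)
      (fun y => ((1 / σ) * (y ^ 2 / σ ^ 2 - 1)) ^ 2 *
        ((Real.sqrt (2 * π) * σ)⁻¹ * Real.exp (-y ^ 2 / (2 * σ ^ 2))) ^ (2 * β + 1)) μ
  rw [hshift]
  -- Step 2: pointwise normal form
  have hpoint : ∀ x : ℝ, ((1 / σ) * (x ^ 2 / σ ^ 2 - 1)) ^ 2 *
          ((Real.sqrt (2 * π) * σ)⁻¹ * Real.exp (-x ^ 2 / (2 * σ ^ 2))) ^ (2 * β + 1)
      = (((Real.sqrt (2 * π) * σ) ^ (2 * β + 1))⁻¹ * (σ ^ 2)⁻¹) *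
          ((((σ ^ 2)⁻¹ * (σ ^ 2)⁻¹) * x ^ 4 + (-2 * (σ ^ 2)⁻¹) * x ^ 2 + 1) *
            Real.exp (-((2 * β + 1) / (2 * σ ^ 2)) * x ^ 2)) := by
    intro x
    rw [Real.mul_rpow (by positivity) (Real.exp_pos _).le,
      Real.inv_rpow (by positivity), ← Real.exp_mul,
      show -x ^ 2 / (2 * σ ^ 2) * (2 * β + 1) = -((2 * β + 1) / (2 * σ ^ 2)) * x ^ 2 from by
        ring]
    field_simp
    ring
  simp only [hpoint]
  rw [MeasureTheory.integral_const_mul, gauss_poly_integral hb]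
  -- Step 3: simplify the bracket and the square root
  have hbr : (σ ^ 2)⁻¹ * (σ ^ 2)⁻¹ * (3 / (4 * ((2 * β + 1) / (2 * σ ^ 2)) ^ 2))
      + (-2 * (σ ^ 2)⁻¹) * (1 / (2 * ((2 * β + 1) / (2 * σ ^ 2)))) + 1
      = 3 / (2 * β + 1) ^ 2 - 2 / (2 * β + 1) + 1 := by
    field_simp
    ring
  have h1 : (1:ℝ) / Real.sqrt (2 * β + 1) = Real.sqrt (2 * β + 1) / (2 * β + 1) := by
    rw [div_eq_div_iff hs.ne' hc.ne', one_mul, Real.mul_self_sqrt hc.le]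
  have hsq : Real.sqrt (π / ((2 * β + 1) / (2 * σ ^ 2)))
      = Real.sqrt (2 * π) * σ * (Real.sqrt (2 * β + 1) / (2 * β + 1)) := by
    rw [show π / ((2 * β + 1) / (2 * σ ^ 2)) = 2 * π * σ ^ 2 / (2 * β + 1) from by
        field_simp,
      Real.sqrt_div (by positivity), Real.sqrt_mul (by positivity), Real.sqrt_sq hσ.le,
      ← h1]
    ring
  rw [hbr, hsq]
  -- Step 4: rpow bookkeeping
  have hT2 : Real.sqrt (2 * π) ^ (2:ℝ) = 2 * π := by
    rw [show (2:ℝ) = ((2:ℕ):ℝ) from by norm_num, Real.rpow_natCast, Real.sq_sqrt (by positivity)]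
  have hTc : Real.sqrt (2 * π) ^ (2 * β + 1) = (2 * π) ^ β * Real.sqrt (2 * π) := by
    rw [Real.rpow_add hT, Real.rpow_one, Real.rpow_mul hT.le, hT2]
  have hσc : σ ^ (2 * β + 1) = σ ^ (2 * (β + 1)) * σ⁻¹ := by
    rw [← Real.rpow_neg_one σ, ← Real.rpow_add hσ,
      show 2 * (β + 1) + -1 = 2 * β + 1 from by ring]
  have hmul : (Real.sqrt (2 * π) * σ) ^ (2 * β + 1)
      = ((2 * π) ^ β * Real.sqrt (2 * π)) * (σ ^ (2 * (β + 1)) * σ⁻¹) := by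
    rw [Real.mul_rpow hT.le hσ.le, hTc, hσc]
  have e1 : ((2 * π) ^ (β / 2)) ^ 2 = (2 * π) ^ β := by
    rw [← Real.rpow_natCast ((2 * π) ^ (β / 2)) 2, ← Real.rpow_mul (by positivity)]
    norm_num
  have e2 : (σ ^ (β + 1)) ^ 2 = σ ^ (2 * (β + 1)) := by
    rw [← Real.rpow_natCast (σ ^ (β + 1)) 2, ← Real.rpow_mul hσ.le]
    push_cast
    ring_nf
  have e3 : ((β + 1) ^ ((3:ℝ) / 2)) ^ 2 = (β + 1) ^ 3 := by
    rw [← Real.rpow_natCast ((β + 1) ^ ((3:ℝ) / 2)) 2, ← Real.rpow_mul (by linarith),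
      show (3:ℝ) / 2 * ((2:ℕ):ℝ) = ((3:ℕ):ℝ) from by push_cast; norm_num,
      Real.rpow_natCast]
  have hξsq : ξ₂ ^ 2 = β ^ 2 / ((2 * π) ^ β * σ ^ (2 * (β + 1)) * (β + 1) ^ 3) := by
    rw [hξ₂, div_pow, neg_pow, mul_pow, mul_pow, e1, e2, e3]
    simp
  rw [hmul, hξsq, hτ, sub_div]
  -- Step 5: final algebra
  have hP : (0:ℝ) < (2 * π) ^ β := Real.rpow_pos_of_pos (by positivity) β
  have hG : (0:ℝ) < σ ^ (2 * (β + 1)) := Real.rpow_pos_of_pos hσ _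
  have hc3 : (2 * β + 1) ^ 2 - 2 * (2 * β + 1) + 3 = 2 * (2 * β ^ 2 + 1) := by ring
  field_simp
  ring
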